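/- Let 𝔉 be a finite, clean, directed family of frames in general position. Then the intersection graph of 𝔉 is an overlap game graph: there exist a rooted forest M with vertex set 𝔉 and a representation μ assigning to each frame a nondegenerate closed interval of ℝ with all endpoints pairwise distinct, such that conditions (G1), (G2), (G3) hold for the intersection graph of 𝔉. -/

import Mathlib

open Set

/-- An axis-aligned rectangle `[l, r] × [b, t]` with `l < r` and `b < t`. -/
structure Rect where
  l : ℝ
  r : ℝ
  b : ℝ
  t : ℝ
  hlr : l < r
  hbt : b < t

noncomputable instance : DecidableEq Rect := Classical.decEq _

/-- The filling rectangle, as a subset of the plane. -/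
def Rect.toSet (R : Rect) : Set (ℝ × ℝ) := Set.Icc R.l R.r ×ˢ Set.Icc R.b R.t

/-- The frame: the boundary (topological frontier) of the filling rectangle. -/
def Rect.frame (R : Rect) : Set (ℝ × ℝ) := frontier R.toSet

/-- A family of frames is in general position. -/
def GenPos (𝔉 : Finset Rect) : Prop :=
  ∀ F ∈ 𝔉, ∀ F' ∈ 𝔉, F ≠ F' →
    [F.l, F.r, F'.l, F'.r].Pairwise (· ≠ ·) ∧
    [F.b, F.t, F'.b, F'.t].Pairwise (· ≠ ·)

/-- The intersection graph of a family of frames. -/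
def frameGraph (𝔉 : Finset Rect) : SimpleGraph {F : Rect // F ∈ 𝔉} where
  Adj F F' := F ≠ F' ∧ (F.1.frame ∩ F'.1.frame).Nonempty
  symm := by
    constructor
    intro a b h
    exact ⟨h.1.symm, by rw [Set.inter_comm]; exact h.2⟩
  loopless := by constructor; intro a h; exact h.1 rfl

/-- The intersection of frames `F` and `F'` is rightward-directed. -/
def RightDir (F F' : Rect) : Prop :=
  F.l < F'.l ∧ F'.l < F.r ∧ F.r < F'.r ∧ F.b < F'.b ∧ F'.b < F'.t ∧ F'.t < F.t

/-- The intersection of frames `F` and `F'` is leftward-directed. -/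
def LeftDir (F F' : Rect) : Prop :=
  F'.l < F.l ∧ F.l < F'.r ∧ F'.r < F.r ∧ F.b < F'.b ∧ F'.b < F'.t ∧ F'.t < F.t

/-- The intersection of frames `F` and `F'` is upward-directed. -/
def UpDir (F F' : Rect) : Prop :=
  F.b < F'.b ∧ F'.b < F.t ∧ F.t < F'.t ∧ F.l < F'.l ∧ F'.l < F'.r ∧ F'.r < F.r

/-- The intersection of frames `F` and `F'` is downward-directed. -/
def DownDir (F F' : Rect) : Prop :=
  F'.b < F.b ∧ F.b < F'.t ∧ F'.t < F.t ∧ F.l < F'.l ∧ F'.l < F'.r ∧ F'.r < F.r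

/-- Any two intersecting frames of the family satisfy `P` (in one of the two orders). -/
def IntersectingPairsSatisfy (𝔉 : Finset Rect) (P : Rect → Rect → Prop) : Prop :=
  ∀ F ∈ 𝔉, ∀ F' ∈ 𝔉, F ≠ F' → (F.frame ∩ F'.frame).Nonempty → P F F' ∨ P F' F

def IsRightwardDirected (𝔉 : Finset Rect) : Prop := IntersectingPairsSatisfy 𝔉 RightDir

/-- A directed family of frames. -/
def IsDirectedFamily (𝔉 : Finset Rect) : Prop :=
  IntersectingPairsSatisfy 𝔉 RightDir ∨ IntersectingPairsSatisfy 𝔉 LeftDir ∨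
    IntersectingPairsSatisfy 𝔉 UpDir ∨ IntersectingPairsSatisfy 𝔉 DownDir

/-- `F` is enclosed by `F'`. -/
def Enclosed (F F' : Rect) : Prop :=
  F'.l < F.l ∧ F.r < F'.r ∧ F'.b < F.b ∧ F.t < F'.t

/-- A clean family of frames. -/
def Clean (𝔉 : Finset Rect) : Prop :=
  ¬ ∃ F₁ ∈ 𝔉, ∃ F₂ ∈ 𝔉, ∃ F₃ ∈ 𝔉, F₁ ≠ F₂ ∧
    (Rect.frame F₁ ∩ Rect.frame F₂).Nonempty ∧ Enclosed F₃ F₁ ∧ Enclosed F₃ F₂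

/-- The overlap graph of a family of rectangles: two rectangles are adjacent if they
intersect but neither is a subset of the other. -/
def overlapGraph (𝔉 : Finset Rect) : SimpleGraph {R : Rect // R ∈ 𝔉} where
  Adj R S := (R.1.toSet ∩ S.1.toSet).Nonempty ∧ ¬ R.1.toSet ⊆ S.1.toSet ∧ ¬ S.1.toSet ⊆ R.1.toSet
  symm := by
    constructor
    intro a b h
    exact ⟨by rw [Set.inter_comm]; exact h.1, h.2.2, h.2.1⟩
  loopless := by constructor; intro a h; exact h.2.1 subset_rfl


/-- Closed intervals `[a, b]` and `[c, d]` overlap. -/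
def IntervalOverlap (a b c d : ℝ) : Prop :=
  (a < c ∧ c < b ∧ b < d) ∨ (c < a ∧ a < d ∧ d < b)

/-- A rooted forest on the vertex set `V`, given by a parent function with no cycles. -/
structure RootedForest (V : Type) where
  parent : V → Option V
  acyclic : ∀ v, ¬ Relation.TransGen (fun x y => parent y = some x) v v

/-- `M.anc x y` means `x ≠ y` and `x` is an ancestor of `y` in `M` (written `x ≺ y`). -/
def RootedForest.anc {V : Type} (M : RootedForest V) : V → V → Prop :=
  Relation.TransGen (fun x y => M.parent y = some x)

/-- `G` is an overlap game graph with meta-forest `M` and representation `v ↦ [μl v, μr v]`. -/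
structure IsOGG {V : Type} (G : SimpleGraph V) (M : RootedForest V) (μl μr : V → ℝ) : Prop where
  nondeg : ∀ v, μl v < μr v
  endpoints_lr : ∀ v w, μl v ≠ μr w
  endpoints_l : ∀ v w, v ≠ w → μl v ≠ μl w
  endpoints_r : ∀ v w, v ≠ w → μr v ≠ μr w
  g1 : ∀ x y, M.anc x y → μl x < μl y
  g2 : ∀ x y, G.Adj x y ↔
    (M.anc x y ∨ M.anc y x) ∧ IntervalOverlap (μl x) (μr x) (μl y) (μr y)
  g3 : ¬ ∃ x y z, M.anc x y ∧ M.anc y z ∧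
    IntervalOverlap (μl x) (μr x) (μl y) (μr y) ∧
    Set.Icc (μl z) (μr z) ⊆ Set.Icc (μl x) (μr x) ∩ Set.Icc (μl y) (μr y)

/-- A vertex is secondary if its interval is contained in the interval of its parent. -/
def Secondary {V : Type} (M : RootedForest V) (μl μr : V → ℝ) (v : V) : Prop :=
  ∃ u, M.parent v = some u ∧ Set.Icc (μl v) (μr v) ⊆ Set.Icc (μl u) (μr u)

def Primary {V : Type} (M : RootedForest V) (μl μr : V → ℝ) (v : V) : Prop :=
  ¬ Secondary M μl μr v

/-- `P(u)`: the set of vertices `v` such that `u` is the first primary vertex on the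
path in `M` from `v` towards the root (including `u` itself). -/
def Pset {V : Type} (M : RootedForest V) (μl μr : V → ℝ) (u : V) : Set V :=
  {v | (u = v ∨ M.anc u v) ∧
    ∀ w, (w = v ∨ M.anc w v) → M.anc u w → Secondary M μl μr w}

def IsLeaf {V : Type} (M : RootedForest V) (v : V) : Prop := ∀ w, M.parent w ≠ some v

/-- `P` is the vertex set of a root-to-leaf path of `M`. -/
def RootToLeafPath {V : Type} (M : RootedForest V) (P : Set V) : Prop :=
  ∃ v, IsLeaf M v ∧ P = {w | w = v ∨ M.anc w v}

/-- The number of vertices of the subtree of `M` rooted at `v`. -/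
noncomputable def subtreeSize {V : Type} (M : RootedForest V) (v : V) : ℕ :=
  Nat.card {w : V // w = v ∨ M.anc v w}

/-- `s` assigns to each non-leaf vertex a child whose subtree is largest. -/
def IsHeavyChildFun {V : Type} (M : RootedForest V) (s : V → V) : Prop :=
  ∀ u : V, (∃ w, M.parent w = some u) →
    M.parent (s u) = some u ∧ ∀ w, M.parent w = some u → subtreeSize M w ≤ subtreeSize M (s u)

/-- A heavy edge from `x` to its child `y = s x`. -/
def HeavyStep {V : Type} (M : RootedForest V) (s : V → V) (x y : V) : Prop :=
  M.parent y = some x ∧ y = s x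

/-- `x` and `y` lie on the same heavy path of the heavy-light decomposition given by `s`. -/
def SameHeavyPath {V : Type} (M : RootedForest V) (s : V → V) (x y : V) : Prop :=
  Relation.EqvGen (HeavyStep M s) x y


/-! ### Auxiliary geometric lemmas -/

lemma frame_eq (R : Rect) :
    R.frame = (Icc R.l R.r ×ˢ ({R.b, R.t} : Set ℝ)) ∪ (({R.l, R.r} : Set ℝ) ×ˢ Icc R.b R.t) := by
  unfold Rect.frame Rect.toSet
  rw [frontier_prod_eq, closure_Icc, frontier_Icc R.hlr.le, frontier_Icc R.hbt.le,
    closure_Icc]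

lemma mem_frame_iff (R : Rect) (x y : ℝ) :
    (x, y) ∈ R.frame ↔
      (x ∈ Icc R.l R.r ∧ (y = R.b ∨ y = R.t)) ∨ ((x = R.l ∨ x = R.r) ∧ y ∈ Icc R.b R.t) := by
  rw [frame_eq]
  simp [Set.mem_prod]

lemma meet_of_pt (F F' : Rect) (x0 y0 : ℝ) (hx1 : x0 ∈ Icc F.l F.r)
    (hx2 : x0 = F'.l ∨ x0 = F'.r) (hy1 : y0 = F.b ∨ y0 = F.t) (hy2 : y0 ∈ Icc F'.b F'.t) :
    (F.frame ∩ F'.frame).Nonempty := by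
  refine ⟨(x0, y0), ?_, ?_⟩
  · exact (mem_frame_iff F x0 y0).2 (Or.inl ⟨hx1, hy1⟩)
  · exact (mem_frame_iff F' x0 y0).2 (Or.inr ⟨hx2, hy2⟩)

lemma dich {a b c d : ℝ} (h1 : c < b) (h2 : a < d) :
    (c ∈ Icc a b ∨ d ∈ Icc a b) ∨ (c < a ∧ b < d) := by
  rcases le_or_gt a c with h | h
  · exact Or.inl (Or.inl ⟨h, h1.le⟩)
  · rcases le_or_gt d b with h' | h'
    · exact Or.inl (Or.inr ⟨h2.le, h'⟩)
    · exact Or.inr ⟨h, h'⟩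

lemma frames_meet_iff (F F' : Rect) (h1 : F'.l ≠ F.r) (h2 : F.l ≠ F'.r)
    (h3 : F'.b ≠ F.t) (h4 : F.b ≠ F'.t) :
    (F.frame ∩ F'.frame).Nonempty ↔
      (F'.l < F.r ∧ F.l < F'.r ∧ F'.b < F.t ∧ F.b < F'.t ∧
        ¬Enclosed F F' ∧ ¬Enclosed F' F) := by
  constructor
  · rintro ⟨⟨x, y⟩, hF, hF'⟩
    have hxF : x ∈ Icc F.l F.r ∧ y ∈ Icc F.b F.t := by
      rcases (mem_frame_iff F x y).1 hF with ⟨hx, hy⟩ | ⟨hx, hy⟩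
      · rcases hy with rfl | rfl
        · exact ⟨hx, ⟨le_refl _, F.hbt.le⟩⟩
        · exact ⟨hx, ⟨F.hbt.le, le_refl _⟩⟩
      · rcases hx with rfl | rfl
        · exact ⟨⟨le_refl _, F.hlr.le⟩, hy⟩
        · exact ⟨⟨F.hlr.le, le_refl _⟩, hy⟩
    have hxF' : x ∈ Icc F'.l F'.r ∧ y ∈ Icc F'.b F'.t := by
      rcases (mem_frame_iff F' x y).1 hF' with ⟨hx, hy⟩ | ⟨hx, hy⟩
      · rcases hy with rfl | rfl
        · exact ⟨hx, ⟨le_refl _, F'.hbt.le⟩⟩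
        · exact ⟨hx, ⟨F'.hbt.le, le_refl _⟩⟩
      · rcases hx with rfl | rfl
        · exact ⟨⟨le_refl _, F'.hlr.le⟩, hy⟩
        · exact ⟨⟨F'.hlr.le, le_refl _⟩, hy⟩
    obtain ⟨⟨⟨hx1, hx2⟩, ⟨hy1, hy2⟩⟩, ⟨⟨hx1', hx2'⟩, ⟨hy1', hy2'⟩⟩⟩ := And.intro hxF hxF'
    refine ⟨lt_of_le_of_ne (hx1'.trans hx2) h1, lt_of_le_of_ne (hx1.trans hx2') h2,
      lt_of_le_of_ne (hy1'.trans hy2) h3, lt_of_le_of_ne (hy1.trans hy2') h4, ?_, ?_⟩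
    · rintro ⟨e1, e2, e3, e4⟩
      rcases (mem_frame_iff F' x y).1 hF' with ⟨_, hy⟩ | ⟨hx, _⟩
      · rcases hy with rfl | rfl
        · exact absurd (e3.trans_le hy1) (lt_irrefl _)
        · exact absurd (e4.trans_le hy2) (lt_irrefl _)
      · rcases hx with rfl | rfl
        · exact absurd (e1.trans_le hx1) (lt_irrefl _)
        · exact absurd (e2.trans_le hx2) (lt_irrefl _)
    · rintro ⟨e1, e2, e3, e4⟩
      rcases (mem_frame_iff F x y).1 hF with ⟨_, hy⟩ | ⟨hx, _⟩
      · rcases hy with rfl | rfl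
        · exact absurd (e3.trans_le hy1') (lt_irrefl _)
        · exact absurd (e4.trans_le hy2') (lt_irrefl _)
      · rcases hx with rfl | rfl
        · exact absurd (e1.trans_le hx1') (lt_irrefl _)
        · exact absurd (e2.trans_le hx2') (lt_irrefl _)
  · rintro ⟨ha, hb, hc, hd, hne1, hne2⟩
    have P1 := dich (a := F.l) (b := F.r) (c := F'.l) (d := F'.r) ha hb
    have P2 := dich (a := F'.l) (b := F'.r) (c := F.l) (d := F.r) hb ha
    have Q1 := dich (a := F'.b) (b := F'.t) (c := F.b) (d := F.t) hd hc
    have Q2 := dich (a := F.b) (b := F.t) (c := F'.b) (d := F'.t) hc hd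
    have swap : (F'.frame ∩ F.frame).Nonempty → (F.frame ∩ F'.frame).Nonempty := by
      rw [Set.inter_comm]; exact id
    rcases P1 with hP1 | hP1
    · rcases Q1 with hQ1 | hQ1
      · rcases hP1 with hx | hx
        · rcases hQ1 with hy | hy
          · exact meet_of_pt F F' F'.l F.b hx (Or.inl rfl) (Or.inl rfl) hy
          · exact meet_of_pt F F' F'.l F.t hx (Or.inl rfl) (Or.inr rfl) hy
        · rcases hQ1 with hy | hy
          · exact meet_of_pt F F' F'.r F.b hx (Or.inr rfl) (Or.inl rfl) hy
          · exact meet_of_pt F F' F'.r F.t hx (Or.inr rfl) (Or.inr rfl) hy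
      · have hyb : F'.b ∈ Icc F.b F.t := ⟨hQ1.1.le, (F'.hbt.trans hQ1.2).le⟩
        rcases P2 with hP2 | hP2
        · rcases hP2 with hx | hx
          · exact swap (meet_of_pt F' F F.l F'.b hx (Or.inl rfl) (Or.inl rfl) hyb)
          · exact swap (meet_of_pt F' F F.r F'.b hx (Or.inr rfl) (Or.inl rfl) hyb)
        · exact absurd ⟨hP2.1, hP2.2, hQ1.1, hQ1.2⟩ hne2
    · have hxl : F.l ∈ Icc F'.l F'.r := ⟨hP1.1.le, (F.hlr.trans hP1.2).le⟩
      rcases Q2 with hQ2 | hQ2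
      · rcases hQ2 with hy | hy
        · exact swap (meet_of_pt F' F F.l F'.b hxl (Or.inl rfl) (Or.inl rfl) hy)
        · exact swap (meet_of_pt F' F F.l F'.t hxl (Or.inl rfl) (Or.inr rfl) hy)
      · exact absurd ⟨hP1.1, hP1.2, hQ2.1, hQ2.2⟩ hne1

/-! ### Abstract combinatorial core -/

/-- Abstract rightward-directed intersection, in coordinates `a, c` (horizontal)
and `p, q` (vertical). -/
def AD (a c p q : Rect → ℝ) (F F' : Rect) : Prop :=
  a F < a F' ∧ a F' < c F ∧ c F < c F' ∧ p F < p F' ∧ q F' < q F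

/-- Abstract enclosure: `F` enclosed by `F'`. -/
def AE (a c p q : Rect → ℝ) (F F' : Rect) : Prop :=
  a F' < a F ∧ c F < c F' ∧ p F' < p F ∧ q F < q F'

/-- The predecessor relation used to build the meta-forest. -/
def PredR (a c p q : Rect → ℝ) (F F' : Rect) : Prop :=
  AD a c p q F F' ∨ AE a c p q F' F

lemma PredR.props {a c p q : Rect → ℝ} {F F' : Rect} (h : PredR a c p q F F') :
    a F < a F' ∧ p F < p F' ∧ q F' < q F := by
  rcases h with ⟨h1, h2, h3, h4, h5⟩ | ⟨h1, h2, h3, h4⟩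
  · exact ⟨h1, h4, h5⟩
  · exact ⟨h1, h3, h4⟩

lemma core (𝔉 : Finset Rect) (a c p q : Rect → ℝ)
    (hndx : ∀ F ∈ 𝔉, a F < c F) (hndy : ∀ F ∈ 𝔉, p F < q F)
    (hdis : ∀ F ∈ 𝔉, ∀ F' ∈ 𝔉, F ≠ F' →
      a F ≠ a F' ∧ a F ≠ c F' ∧ c F ≠ a F' ∧ c F ≠ c F')
    (hmeet : ∀ F ∈ 𝔉, ∀ F' ∈ 𝔉, F ≠ F' →
      ((F.frame ∩ F'.frame).Nonempty ↔
        (a F' < c F ∧ a F < c F' ∧ p F' < q F ∧ p F < q F' ∧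
          ¬AE a c p q F F' ∧ ¬AE a c p q F' F)))
    (hdir : ∀ F ∈ 𝔉, ∀ F' ∈ 𝔉, F ≠ F' → (F.frame ∩ F'.frame).Nonempty →
      AD a c p q F F' ∨ AD a c p q F' F)
    (hcl : ∀ F₁ ∈ 𝔉, ∀ F₂ ∈ 𝔉, ∀ F₃ ∈ 𝔉, F₁ ≠ F₂ →
      (F₁.frame ∩ F₂.frame).Nonempty → AE a c p q F₃ F₁ → AE a c p q F₃ F₂ → False) :
    ∃ (M : RootedForest {F : Rect // F ∈ 𝔉}) (μl μr : {F : Rect // F ∈ 𝔉} → ℝ),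
      IsOGG (frameGraph 𝔉) M μl μr := by
  classical
  have hne12 : ∀ v w : {F : Rect // F ∈ 𝔉}, v ≠ w → v.1 ≠ w.1 :=
    fun v w h h' => h (Subtype.ext h')
  have hne_of_lt : ∀ v w : {F : Rect // F ∈ 𝔉}, a v.1 < a w.1 → v ≠ w := by
    rintro v w h rfl; exact lt_irrefl _ h
  -- rightward-directed intersection implies the frames meet
  have meet_of_D : ∀ F ∈ 𝔉, ∀ F' ∈ 𝔉, AD a c p q F F' → (F.frame ∩ F'.frame).Nonempty := by
    rintro F hF F' hF' ⟨h1, h2, h3, h4, h5⟩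
    have hne : F ≠ F' := by rintro rfl; exact lt_irrefl _ h1
    refine (hmeet F hF F' hF' hne).2 ⟨h2, h1.trans (h2.trans h3), (hndy F' hF').trans h5,
      h4.trans (hndy F' hF'), ?_, ?_⟩
    · rintro ⟨e1, _⟩; exact absurd (h1.trans e1) (lt_irrefl _)
    · rintro ⟨_, e2, _⟩; exact absurd (h3.trans e2) (lt_irrefl _)
  -- predecessors of a common frame are linearly ordered by `PredR`
  have chain : ∀ A B F : {F : Rect // F ∈ 𝔉}, PredR a c p q A.1 F.1 → PredR a c p q B.1 F.1 →
      a A.1 < a B.1 → PredR a c p q A.1 B.1 := by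
    intro A B F hA hB hab
    by_cases hE : AE a c p q B.1 A.1
    · exact Or.inr hE
    have hcA : a F.1 < c A.1 := by
      rcases hA with ⟨_, h2, _⟩ | ⟨_, h2, _⟩
      · exact h2
      · exact (hndx F.1 F.2).trans h2
    have hcB : a F.1 < c B.1 := by
      rcases hB with ⟨_, h2, _⟩ | ⟨_, h2, _⟩
      · exact h2
      · exact (hndx F.1 F.2).trans h2
    obtain ⟨haA, hpA, hqA⟩ := hA.props
    obtain ⟨haB, hpB, hqB⟩ := hB.props
    have hAB : A.1 ≠ B.1 := hne12 _ _ (hne_of_lt _ _ hab)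
    have hm : (A.1.frame ∩ B.1.frame).Nonempty := by
      refine (hmeet A.1 A.2 B.1 B.2 hAB).2
        ⟨haB.trans hcA, haA.trans hcB, hpB.trans ((hndy F.1 F.2).trans hqA),
          hpA.trans ((hndy F.1 F.2).trans hqB), ?_, hE⟩
      rintro ⟨e1, _⟩; exact absurd (hab.trans e1) (lt_irrefl _)
    rcases hdir A.1 A.2 B.1 B.2 hAB hm with hD | hD
    · exact Or.inl hD
    · exact absurd (hab.trans hD.1) (lt_irrefl _)
  -- the parent function: predecessor with maximal `a`-coordinate
  have hmax : ∀ F : {F : Rect // F ∈ 𝔉}, (∃ B : {F : Rect // F ∈ 𝔉}, PredR a c p q B.1 F.1) →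
      ∃ B : {F : Rect // F ∈ 𝔉}, PredR a c p q B.1 F.1 ∧
        ∀ C : {F : Rect // F ∈ 𝔉}, PredR a c p q C.1 F.1 → a C.1 ≤ a B.1 := by
    intro F hex
    obtain ⟨B0, hB0⟩ := hex
    obtain ⟨B, hBmem, hBmax⟩ := Finset.exists_max_image
      (Finset.univ.filter fun C : {F : Rect // F ∈ 𝔉} => PredR a c p q C.1 F.1)
      (fun C => a C.1) ⟨B0, by simp [hB0]⟩
    exact ⟨B, by simpa using hBmem, fun C hC => hBmax C (by simp [hC])⟩
  obtain ⟨par, hpar1, hpar2⟩ : ∃ par : {F : Rect // F ∈ 𝔉} → Option {F : Rect // F ∈ 𝔉},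
      (∀ (F B : {F : Rect // F ∈ 𝔉}), par F = some B → PredR a c p q B.1 F.1 ∧
        ∀ C : {F : Rect // F ∈ 𝔉}, PredR a c p q C.1 F.1 → a C.1 ≤ a B.1) ∧
      (∀ F, (∃ B : {F : Rect // F ∈ 𝔉}, PredR a c p q B.1 F.1) → par F ≠ none) := by
    refine ⟨fun F => if h : ∃ B : {F : Rect // F ∈ 𝔉}, PredR a c p q B.1 F.1
        then some (hmax F h).choose else none, ?_, ?_⟩
    · intro F B h
      beta_reduce at h
      by_cases hex : ∃ B : {F : Rect // F ∈ 𝔉}, PredR a c p q B.1 F.1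
      · rw [dif_pos hex] at h
        cases h
        exact (hmax F hex).choose_spec
      · rw [dif_neg hex] at h
        cases h
    · intro F hex
      beta_reduce
      rw [dif_pos hex]
      exact Option.some_ne_none _
  have step_pred : ∀ x y, par y = some x → PredR a c p q x.1 y.1 :=
    fun x y h => (hpar1 y x h).1
  have tg_props : ∀ v w, Relation.TransGen (fun x y => par y = some x) v w →
      a v.1 < a w.1 ∧ p v.1 < p w.1 ∧ q w.1 < q v.1 := by
    intro v w h
    induction h with
    | single h => exact (step_pred _ _ h).props
    | tail _ h2 ih =>
      obtain ⟨i1, i2, i3⟩ := ih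
      obtain ⟨j1, j2, j3⟩ := (step_pred _ _ h2).props
      exact ⟨i1.trans j1, i2.trans j2, j3.trans i3⟩
  have M : RootedForest {F : Rect // F ∈ 𝔉} :=
    ⟨par, fun v h => absurd (tg_props v v h).1 (lt_irrefl _)⟩
  refine ⟨⟨par, fun v h => absurd (tg_props v v h).1 (lt_irrefl _)⟩,
    fun v => a v.1, fun v => c v.1, ?_⟩
  have hanc : ∀ v w, (RootedForest.anc ⟨par, fun v h => absurd (tg_props v v h).1 (lt_irrefl _)⟩
      v w : Prop) ↔ Relation.TransGen (fun x y => par y = some x) v w := fun v w => Iff.rfl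
  -- every predecessor is an ancestor
  have wf : WellFounded (fun v w : {F : Rect // F ∈ 𝔉} => a v.1 < a w.1) := by
    have h1 : IsTrans _ (fun v w : {F : Rect // F ∈ 𝔉} => a v.1 < a w.1) :=
      ⟨fun _ _ _ h h' => h.trans h'⟩
    have h2 : IsIrrefl _ (fun v w : {F : Rect // F ∈ 𝔉} => a v.1 < a w.1) :=
      ⟨fun _ => lt_irrefl _⟩
    exact Finite.wellFounded_of_trans_of_irrefl _
  have pred_anc : ∀ F A : {F : Rect // F ∈ 𝔉}, PredR a c p q A.1 F.1 →
      Relation.TransGen (fun x y => par y = some x) A F := by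
    intro F
    refine wf.induction
      (C := fun F => ∀ A, PredR a c p q A.1 F.1 →
        Relation.TransGen (fun x y => par y = some x) A F) F ?_
    intro F ih A hA
    obtain ⟨B, hB⟩ := Option.ne_none_iff_exists'.mp (hpar2 F ⟨A, hA⟩)
    obtain ⟨hBP, hBmax⟩ := hpar1 F B hB
    by_cases hABeq : A = B
    · exact Relation.TransGen.single (hABeq ▸ hB)
    · have hlt : a A.1 < a B.1 :=
        lt_of_le_of_ne (hBmax A hA) ((hdis A.1 A.2 B.1 B.2 (hne12 _ _ hABeq)).1)
      exact (ih B hBP.props.1 A (chain A B F hA hBP hlt)).tail hB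
  constructor
  · -- nondeg
    exact fun v => hndx v.1 v.2
  · -- endpoints_lr
    intro v w
    by_cases h : v = w
    · subst h; exact ne_of_lt (hndx v.1 v.2)
    · exact (hdis v.1 v.2 w.1 w.2 (hne12 _ _ h)).2.1
  · -- endpoints_l
    intro v w h
    exact (hdis v.1 v.2 w.1 w.2 (hne12 _ _ h)).1
  · -- endpoints_r
    intro v w h
    exact (hdis v.1 v.2 w.1 w.2 (hne12 _ _ h)).2.2.2
  · -- g1
    intro x y h
    exact (tg_props x y ((hanc x y).1 h)).1
  · -- g2
    intro x y
    constructor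
    · rintro ⟨h1, h2⟩
      rcases hdir x.1 x.2 y.1 y.2 (hne12 _ _ h1) h2 with hD | hD
      · exact ⟨Or.inl ((hanc x y).2 (pred_anc y x (Or.inl hD))),
          Or.inl ⟨hD.1, hD.2.1, hD.2.2.1⟩⟩
      · exact ⟨Or.inr ((hanc y x).2 (pred_anc x y (Or.inl hD))),
          Or.inr ⟨hD.1, hD.2.1, hD.2.2.1⟩⟩
    · rintro ⟨hanc2 | hanc2, hov⟩
      · obtain ⟨h1, h2, h3⟩ := tg_props x y ((hanc x y).1 hanc2)
        rcases hov with ⟨o1, o2, o3⟩ | ⟨o1, _⟩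
        · exact ⟨hne_of_lt _ _ h1, meet_of_D x.1 x.2 y.1 y.2 ⟨o1, o2, o3, h2, h3⟩⟩
        · exact absurd (h1.trans o1) (lt_irrefl _)
      · obtain ⟨h1, h2, h3⟩ := tg_props y x ((hanc y x).1 hanc2)
        rcases hov with ⟨o1, _⟩ | ⟨o1, o2, o3⟩
        · exact absurd (h1.trans o1) (lt_irrefl _)
        · refine ⟨(hne_of_lt _ _ h1).symm, ?_⟩
          rw [Set.inter_comm]
          exact meet_of_D y.1 y.2 x.1 x.2 ⟨o1, o2, o3, h2, h3⟩
  · -- g3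
    rintro ⟨x, y, z, hxy, hyz, hov, hsub⟩
    obtain ⟨hxy1, hxy2, hxy3⟩ := tg_props x y ((hanc x y).1 hxy)
    obtain ⟨hyz1, hyz2, hyz3⟩ := tg_props y z ((hanc y z).1 hyz)
    obtain ⟨hxz1, hxz2, hxz3⟩ := tg_props x z ((hanc x z).1 (hxy.trans hyz))
    rcases hov with ⟨o1, o2, o3⟩ | ⟨o1, _⟩
    · have hm : (x.1.frame ∩ y.1.frame).Nonempty :=
        meet_of_D x.1 x.2 y.1 y.2 ⟨o1, o2, o3, hxy2, hxy3⟩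
      have hcz : c z.1 ∈ Set.Icc (a x.1) (c x.1) ∩ Set.Icc (a y.1) (c y.1) :=
        hsub ⟨(hndx z.1 z.2).le, le_refl _⟩
      have hczx : c z.1 < c x.1 :=
        lt_of_le_of_ne hcz.1.2 ((hdis z.1 z.2 x.1 x.2 (hne12 _ _ (hne_of_lt x z hxz1).symm)).2.2.2)
      exact hcl x.1 x.2 y.1 y.2 z.1 z.2 (hne12 _ _ (hne_of_lt _ _ hxy1)) hm
        ⟨hxz1, hczx, hxz2, hxz3⟩ ⟨hyz1, hczx.trans o3, hyz2, hyz3⟩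
    · exact absurd (hxy1.trans o1) (lt_irrefl _)


lemma genpos_unpack {𝔉 : Finset Rect} (hgp : GenPos 𝔉) :
    ∀ F ∈ 𝔉, ∀ F' ∈ 𝔉, F ≠ F' →
      (F.l ≠ F.r ∧ F.l ≠ F'.l ∧ F.l ≠ F'.r ∧ F.r ≠ F'.l ∧ F.r ≠ F'.r ∧ F'.l ≠ F'.r) ∧
      (F.b ≠ F.t ∧ F.b ≠ F'.b ∧ F.b ≠ F'.t ∧ F.t ≠ F'.b ∧ F.t ≠ F'.t ∧ F'.b ≠ F'.t) := by
  intro F hF F' hF' hne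
  obtain ⟨h1, h2⟩ := hgp F hF F' hF' hne
  simp only [List.pairwise_cons] at h1 h2
  simp only [List.mem_cons, List.not_mem_nil] at h1 h2
  constructor
  · exact ⟨h1.1 F.r (by simp), h1.1 F'.l (by simp), h1.1 F'.r (by simp),
      h1.2.1 F'.l (by simp), h1.2.1 F'.r (by simp), h1.2.2.1 F'.r (by simp)⟩
  · exact ⟨h2.1 F.t (by simp), h2.1 F'.b (by simp), h2.1 F'.t (by simp),
      h2.2.1 F'.b (by simp), h2.2.1 F'.t (by simp), h2.2.2.1 F'.t (by simp)⟩

/-- The intersection graph of a finite, clean, directed family of frames in general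
position is an overlap game graph. -/
theorem stmt5 (𝔉 : Finset Rect) (hgp : GenPos 𝔉) (hclean : Clean 𝔉)
    (hdir : IsDirectedFamily 𝔉) :
    ∃ (M : RootedForest {F : Rect // F ∈ 𝔉}) (μl μr : {F : Rect // F ∈ 𝔉} → ℝ),
      IsOGG (frameGraph 𝔉) M μl μr := by
  rcases hdir with h | h | h | h
  · -- rightward : a = l, c = r, p = b, q = t
    refine core 𝔉 (fun F => F.l) (fun F => F.r) (fun F => F.b) (fun F => F.t)
      (fun F _ => F.hlr) (fun F _ => F.hbt) ?_ ?_ ?_ ?_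
    · intro F hF F' hF' hne
      obtain ⟨⟨_, x2, x3, x4, x5, _⟩, _⟩ := genpos_unpack hgp F hF F' hF' hne
      exact ⟨x2, x3, x4, x5⟩
    · intro F hF F' hF' hne
      obtain ⟨⟨_, _, x3, x4, _, _⟩, ⟨_, _, y3, y4, _, _⟩⟩ := genpos_unpack hgp F hF F' hF' hne
      exact frames_meet_iff F F' x4.symm x3 y4.symm y3
    · intro F hF F' hF' hne hm
      rcases h F hF F' hF' hne hm with hd | hd
      · exact Or.inl ⟨hd.1, hd.2.1, hd.2.2.1, hd.2.2.2.1, hd.2.2.2.2.2⟩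
      · exact Or.inr ⟨hd.1, hd.2.1, hd.2.2.1, hd.2.2.2.1, hd.2.2.2.2.2⟩
    · intro F₁ h1 F₂ h2 F₃ h3 hne hm he1 he2
      exact hclean ⟨F₁, h1, F₂, h2, F₃, h3, hne, hm, he1, he2⟩
  · -- leftward : a = -r, c = -l, p = b, q = t
    refine core 𝔉 (fun F => -F.r) (fun F => -F.l) (fun F => F.b) (fun F => F.t)
      (fun F _ => neg_lt_neg F.hlr) (fun F _ => F.hbt) ?_ ?_ ?_ ?_
    · intro F hF F' hF' hne
      obtain ⟨⟨_, x2, x3, x4, x5, _⟩, _⟩ := genpos_unpack hgp F hF F' hF' hne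
      exact ⟨fun e => x5 (neg_injective e), fun e => x4 (neg_injective e),
        fun e => x3 (neg_injective e), fun e => x2 (neg_injective e)⟩
    · intro F hF F' hF' hne
      obtain ⟨⟨_, _, x3, x4, _, _⟩, ⟨_, _, y3, y4, _, _⟩⟩ := genpos_unpack hgp F hF F' hF' hne
      rw [frames_meet_iff F F' x4.symm x3 y4.symm y3]
      constructor
      · rintro ⟨g1, g2, g3, g4, g5, g6⟩
        exact ⟨neg_lt_neg g2, neg_lt_neg g1, g3, g4,
          fun he => g5 ⟨neg_lt_neg_iff.mp he.2.1, neg_lt_neg_iff.mp he.1, he.2.2.1, he.2.2.2⟩,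
          fun he => g6 ⟨neg_lt_neg_iff.mp he.2.1, neg_lt_neg_iff.mp he.1, he.2.2.1, he.2.2.2⟩⟩
      · rintro ⟨g1, g2, g3, g4, g5, g6⟩
        exact ⟨neg_lt_neg_iff.mp g2, neg_lt_neg_iff.mp g1, g3, g4,
          fun he => g5 ⟨neg_lt_neg he.2.1, neg_lt_neg he.1, he.2.2.1, he.2.2.2⟩,
          fun he => g6 ⟨neg_lt_neg he.2.1, neg_lt_neg he.1, he.2.2.1, he.2.2.2⟩⟩
    · intro F hF F' hF' hne hm
      rcases h F hF F' hF' hne hm with hd | hd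
      · exact Or.inl ⟨neg_lt_neg hd.2.2.1, neg_lt_neg hd.2.1, neg_lt_neg hd.1,
          hd.2.2.2.1, hd.2.2.2.2.2⟩
      · exact Or.inr ⟨neg_lt_neg hd.2.2.1, neg_lt_neg hd.2.1, neg_lt_neg hd.1,
          hd.2.2.2.1, hd.2.2.2.2.2⟩
    · intro F₁ h1 F₂ h2 F₃ h3 hne hm he1 he2
      refine hclean ⟨F₁, h1, F₂, h2, F₃, h3, hne, hm, ?_, ?_⟩
      · exact ⟨neg_lt_neg_iff.mp he1.2.1, neg_lt_neg_iff.mp he1.1, he1.2.2.1, he1.2.2.2⟩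
      · exact ⟨neg_lt_neg_iff.mp he2.2.1, neg_lt_neg_iff.mp he2.1, he2.2.2.1, he2.2.2.2⟩
  · -- upward : a = b, c = t, p = l, q = r
    refine core 𝔉 (fun F => F.b) (fun F => F.t) (fun F => F.l) (fun F => F.r)
      (fun F _ => F.hbt) (fun F _ => F.hlr) ?_ ?_ ?_ ?_
    · intro F hF F' hF' hne
      obtain ⟨_, ⟨_, y2, y3, y4, y5, _⟩⟩ := genpos_unpack hgp F hF F' hF' hne
      exact ⟨y2, y3, y4, y5⟩
    · intro F hF F' hF' hne
      obtain ⟨⟨_, _, x3, x4, _, _⟩, ⟨_, _, y3, y4, _, _⟩⟩ := genpos_unpack hgp F hF F' hF' hne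
      rw [frames_meet_iff F F' x4.symm x3 y4.symm y3]
      constructor
      · rintro ⟨g1, g2, g3, g4, g5, g6⟩
        exact ⟨g3, g4, g1, g2, fun he => g5 ⟨he.2.2.1, he.2.2.2, he.1, he.2.1⟩,
          fun he => g6 ⟨he.2.2.1, he.2.2.2, he.1, he.2.1⟩⟩
      · rintro ⟨g1, g2, g3, g4, g5, g6⟩
        exact ⟨g3, g4, g1, g2, fun he => g5 ⟨he.2.2.1, he.2.2.2, he.1, he.2.1⟩,
          fun he => g6 ⟨he.2.2.1, he.2.2.2, he.1, he.2.1⟩⟩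
    · intro F hF F' hF' hne hm
      rcases h F hF F' hF' hne hm with hd | hd
      · exact Or.inl ⟨hd.1, hd.2.1, hd.2.2.1, hd.2.2.2.1, hd.2.2.2.2.2⟩
      · exact Or.inr ⟨hd.1, hd.2.1, hd.2.2.1, hd.2.2.2.1, hd.2.2.2.2.2⟩
    · intro F₁ h1 F₂ h2 F₃ h3 hne hm he1 he2
      refine hclean ⟨F₁, h1, F₂, h2, F₃, h3, hne, hm, ?_, ?_⟩
      · exact ⟨he1.2.2.1, he1.2.2.2, he1.1, he1.2.1⟩
      · exact ⟨he2.2.2.1, he2.2.2.2, he2.1, he2.2.1⟩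
  · -- downward : a = -t, c = -b, p = l, q = r
    refine core 𝔉 (fun F => -F.t) (fun F => -F.b) (fun F => F.l) (fun F => F.r)
      (fun F _ => neg_lt_neg F.hbt) (fun F _ => F.hlr) ?_ ?_ ?_ ?_
    · intro F hF F' hF' hne
      obtain ⟨_, ⟨_, y2, y3, y4, y5, _⟩⟩ := genpos_unpack hgp F hF F' hF' hne
      exact ⟨fun e => y5 (neg_injective e), fun e => y4 (neg_injective e),
        fun e => y3 (neg_injective e), fun e => y2 (neg_injective e)⟩
    · intro F hF F' hF' hne
      obtain ⟨⟨_, _, x3, x4, _, _⟩, ⟨_, _, y3, y4, _, _⟩⟩ := genpos_unpack hgp F hF F' hF' hne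
      rw [frames_meet_iff F F' x4.symm x3 y4.symm y3]
      constructor
      · rintro ⟨g1, g2, g3, g4, g5, g6⟩
        exact ⟨neg_lt_neg g4, neg_lt_neg g3, g1, g2,
          fun he => g5 ⟨he.2.2.1, he.2.2.2, neg_lt_neg_iff.mp he.2.1, neg_lt_neg_iff.mp he.1⟩,
          fun he => g6 ⟨he.2.2.1, he.2.2.2, neg_lt_neg_iff.mp he.2.1, neg_lt_neg_iff.mp he.1⟩⟩
      · rintro ⟨g1, g2, g3, g4, g5, g6⟩
        exact ⟨g3, g4, neg_lt_neg_iff.mp g2, neg_lt_neg_iff.mp g1,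
          fun he => g5 ⟨neg_lt_neg he.2.2.2, neg_lt_neg he.2.2.1, he.1, he.2.1⟩,
          fun he => g6 ⟨neg_lt_neg he.2.2.2, neg_lt_neg he.2.2.1, he.1, he.2.1⟩⟩
    · intro F hF F' hF' hne hm
      rcases h F hF F' hF' hne hm with hd | hd
      · exact Or.inl ⟨neg_lt_neg hd.2.2.1, neg_lt_neg hd.2.1, neg_lt_neg hd.1,
          hd.2.2.2.1, hd.2.2.2.2.2⟩
      · exact Or.inr ⟨neg_lt_neg hd.2.2.1, neg_lt_neg hd.2.1, neg_lt_neg hd.1,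
          hd.2.2.2.1, hd.2.2.2.2.2⟩
    · intro F₁ h1 F₂ h2 F₃ h3 hne hm he1 he2
      refine hclean ⟨F₁, h1, F₂, h2, F₃, h3, hne, hm, ?_, ?_⟩
      · exact ⟨he1.2.2.1, he1.2.2.2, neg_lt_neg_iff.mp he1.2.1, neg_lt_neg_iff.mp he1.1⟩
      · exact ⟨he2.2.2.1, he2.2.2.2, neg_lt_neg_iff.mp he2.2.1, neg_lt_neg_iff.mp he2.1⟩
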